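/- Let G be a compact group with normalized Haar probability measure, let A be a C*-algebra, and let α be an action of G on A (a homomorphism into the *-automorphism group of A with g ↦ α_g(a) norm-continuous for each a ∈ A). Define E_α : A → A by the Bochner integral E_α(x) = ∫_G α_g(x) dg. If (u_λ)_{λ∈Λ} is an approximate unit of A, i.e. a net of positive elements with ‖u_λ‖ ≤ 1 such that ‖u_λ·a − a‖ → 0 and ‖a·u_λ − a‖ → 0 for every a ∈ A, then (E_α(u_λ))_{λ∈Λ} is also an approximate unit of A. -/

import Mathlib

open MeasureTheory Filter

/-- An element of a C*-algebra is positive iff it is of the form `star y * y`. -/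
def IsPositiveElem {A : Type*} [Mul A] [Star A] (x : A) : Prop :=
  ∃ y : A, x = star y * y

section Aux

variable {A : Type*} [NonUnitalCStarAlgebra A]

/-- A partial order on a non-unital C*-algebra, pulled back from the spectral order on the
unitization. -/
noncomputable def cstarPartialOrder : PartialOrder A :=
  letI := CStarAlgebra.spectralOrder (Unitization ℂ A)
  PartialOrder.lift (Unitization.inr : A → Unitization ℂ A) Unitization.inr_injective

lemma cstarStarOrderedRing : @StarOrderedRing A _ cstarPartialOrder _ := by
  letI := CStarAlgebra.spectralOrder (Unitization ℂ A)
  haveI := CStarAlgebra.spectralOrderedRing (Unitization ℂ A)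
  letI := cstarPartialOrder (A := A)
  have hle : ∀ x y : A, x ≤ y ↔ (x : Unitization ℂ A) ≤ (y : Unitization ℂ A) := fun _ _ => Iff.rfl
  refine StarOrderedRing.of_nonneg_iff' ?_ ?_
  · intro x y hxy z
    rw [hle] at hxy ⊢
    simpa only [Unitization.inr_add] using add_le_add le_rfl hxy
  · intro x
    constructor
    · intro hx
      rw [hle, Unitization.inr_zero] at hx
      have h1 : IsSelfAdjoint ((x : Unitization ℂ A)) ∧
          SpectrumRestricts ((x : Unitization ℂ A)) ContinuousMap.realToNNReal :=
        ⟨IsSelfAdjoint.of_nonneg hx, SpectrumRestricts.nnreal_of_nonneg hx⟩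
      have hsa : IsSelfAdjoint x := by
        rw [← Unitization.isSelfAdjoint_inr (R := ℂ)]
        exact h1.1
      have hqr : QuasispectrumRestricts x ContinuousMap.realToNNReal := by
        rw [QuasispectrumRestricts.nnreal_iff]
        intro t ht
        rw [Unitization.quasispectrum_eq_spectrum_inr' ℝ ℂ] at ht
        exact (SpectrumRestricts.nnreal_iff.mp h1.2) t ht
      obtain ⟨s, hs, -, hss⟩ :=
        CFC.exists_sqrt_of_isSelfAdjoint_of_quasispectrumRestricts hsa hqr
      exact ⟨s, by rw [hs.star_eq, hss]⟩
    · rintro ⟨s, rfl⟩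
      rw [hle, Unitization.inr_zero, Unitization.inr_mul, Unitization.inr_star]
      exact star_mul_self_nonneg _

variable [PartialOrder A] [StarOrderedRing A]

lemma isPositiveElem_iff_nonneg (x : A) : IsPositiveElem x ↔ 0 ≤ x := by
  constructor
  · rintro ⟨y, rfl⟩
    exact star_mul_self_nonneg y
  · intro h
    exact ⟨CFC.sqrt x, by
      rw [(IsSelfAdjoint.of_nonneg (CFC.sqrt_nonneg x)).star_eq, CFC.sqrt_mul_sqrt_self x h]⟩

lemma real_smul_nonneg {t : ℝ} (ht : 0 ≤ t) {x : A} (hx : 0 ≤ x) : 0 ≤ t • x := by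
  obtain ⟨y, rfl⟩ := (isPositiveElem_iff_nonneg x).2 hx
  have : star (Real.sqrt t • y) * (Real.sqrt t • y) = t • (star y * y) := by
    rw [star_smul, star_trivial (Real.sqrt t), smul_mul_smul_comm, Real.mul_self_sqrt ht]
  rw [← this]
  exact star_mul_self_nonneg _

lemma convex_nonneg_cstar : Convex ℝ {x : A | 0 ≤ x} := fun x hx y hy s t hs ht _ =>
  add_nonneg (real_smul_nonneg hs hx) (real_smul_nonneg ht hy)

end Aux

lemma exists_uniform_small {A : Type*} [NormedAddCommGroup A] {Λ : Type*} [Nonempty Λ]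
    [SemilatticeSup Λ] (v : Λ → A → A)
    (hlip : ∀ (l : Λ) (b c : A), ‖v l b‖ ≤ 2 * ‖b - c‖ + ‖v l c‖)
    (htend : ∀ b : A, Tendsto (fun l => ‖v l b‖) atTop (nhds 0))
    {K : Set A} (hK : IsCompact K) {ε : ℝ} (hε : 0 < ε) :
    ∃ l0 : Λ, ∀ l ≥ l0, ∀ b ∈ K, ‖v l b‖ < ε := by
  have hcover : K ⊆ ⋃ c ∈ K, Metric.ball c (ε / 6) := fun b hb =>
    Set.mem_biUnion hb (by simp only [Metric.mem_ball, dist_self]; positivity)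
  obtain ⟨t, htK, htfin, htcover⟩ :=
    hK.elim_finite_subcover_image (fun c _ => Metric.isOpen_ball) hcover
  have hch : ∀ c : A, ∃ N : Λ, c ∈ t → ∀ l ≥ N, ‖v l c‖ < ε / 2 := by
    intro c
    have h2 : ∀ᶠ l in atTop, ‖v l c‖ < ε / 2 :=
      (htend c).eventually_lt_const (by positivity)
    rw [eventually_atTop] at h2
    obtain ⟨N, hN⟩ := h2
    exact ⟨N, fun _ => hN⟩
  choose N hN using hch
  obtain ⟨s, rfl⟩ := htfin.exists_finset_coe
  rcases s.eq_empty_or_nonempty with rfl | hne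
  · refine ⟨Classical.arbitrary Λ, fun l _ b hb => absurd (htcover hb) ?_⟩
    simp
  · refine ⟨s.sup' hne N, fun l hl b hb => ?_⟩
    obtain ⟨c, hc, hbc⟩ := Set.mem_iUnion₂.mp (htcover hb)
    have hcl : N c ≤ l := le_trans (Finset.le_sup' N hc) hl
    have hdist : ‖b - c‖ < ε / 6 := by
      rw [← dist_eq_norm]; exact hbc
    have := hN c hc l hcl
    calc ‖v l b‖ ≤ 2 * ‖b - c‖ + ‖v l c‖ := hlip l b c
      _ < 2 * (ε / 6) + ε / 2 := by linarith
      _ < ε := by linarith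

theorem approximateUnit_average_isApproximateUnit_aux
    {G A : Type*} [TopologicalSpace G] [Group G] [IsTopologicalGroup G] [CompactSpace G]
    [MeasurableSpace G] [BorelSpace G]
    [NonUnitalCStarAlgebra A] [PartialOrder A] [StarOrderedRing A]
    (μ : Measure G) [μ.IsHaarMeasure] [IsProbabilityMeasure μ]
    (α : G → (A ≃⋆ₐ[ℂ] A))
    (hone : α 1 = StarAlgEquiv.refl ℂ A)
    (hmul : ∀ g h : G, ∀ a : A, α (g * h) a = α g (α h a))
    (hcont : ∀ a : A, Continuous fun g : G => α g a)
    {Λ : Type*} [Nonempty Λ] [SemilatticeSup Λ]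
    (u : Λ → A)
    (hpos : ∀ l : Λ, IsPositiveElem (u l))
    (hnorm : ∀ l : Λ, ‖u l‖ ≤ 1)
    (happrox : ∀ a : A,
      Tendsto (fun l : Λ => ‖u l * a - a‖) atTop (nhds 0) ∧
      Tendsto (fun l : Λ => ‖a * u l - a‖) atTop (nhds 0)) :
    (∀ l : Λ, IsPositiveElem (∫ g : G, α g (u l) ∂μ) ∧ ‖∫ g : G, α g (u l) ∂μ‖ ≤ 1) ∧
    (∀ a : A,
      Tendsto (fun l : Λ => ‖(∫ g : G, α g (u l) ∂μ) * a - a‖) atTop (nhds 0) ∧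
      Tendsto (fun l : Λ => ‖a * (∫ g : G, α g (u l) ∂μ) - a‖) atTop (nhds 0)) := by
  -- integrability of continuous functions
  have hCint : ∀ f : G → A, Continuous f → Integrable f μ := fun f hf =>
    hf.integrable_of_hasCompactSupport ((isClosed_tsupport _).isCompact)
  have hintg : ∀ x : A, Integrable (fun g => α g x) μ := fun x => hCint _ (hcont x)
  -- norms are preserved
  have hnm : ∀ (g : G) (x : A), ‖α g x‖ = ‖x‖ := fun g x =>
    NonUnitalStarAlgHom.norm_map (α g) (α g).injective x
  -- inverse identity
  have hinv : ∀ (g : G) (b : A), α g (α g⁻¹ b) = b := fun g b => by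
    rw [← hmul, mul_inv_cancel, hone]; rfl
  -- key norm identities
  have hkeyL : ∀ (g : G) (x b : A), ‖α g x * b - b‖ = ‖x * α g⁻¹ b - α g⁻¹ b‖ := by
    intro g x b
    conv_lhs => rw [← hinv g b]
    rw [← map_mul, ← map_sub, hnm]
  have hkeyR : ∀ (g : G) (x b : A), ‖b * α g x - b‖ = ‖α g⁻¹ b * x - α g⁻¹ b‖ := by
    intro g x b
    conv_lhs => rw [← hinv g b]
    rw [← map_mul, ← map_sub, hnm]
  constructor
  · intro l
    constructor
    · -- positivity
      rw [isPositiveElem_iff_nonneg]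
      have h1 : ∀ g : G, 0 ≤ α g (u l) := by
        intro g
        obtain ⟨y, hy⟩ := hpos l
        rw [hy, map_mul, map_star]
        exact star_mul_self_nonneg _
      have hmem : (∫ g : G, α g (u l) ∂μ) ∈ {x : A | 0 ≤ x} :=
        convex_nonneg_cstar.integral_mem (CStarAlgebra.isClosed_nonneg (A := A))
          (Eventually.of_forall fun g => h1 g) (hintg (u l))
      exact hmem
    · -- norm bound
      calc ‖∫ g : G, α g (u l) ∂μ‖ ≤ ∫ g : G, ‖α g (u l)‖ ∂μ := norm_integral_le_integral_norm _
        _ = ∫ _g : G, ‖u l‖ ∂μ := by simp_rw [hnm]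
        _ = ‖u l‖ := by simp
        _ ≤ 1 := hnorm l
  · intro a
    -- the integral of a constant
    have hconst : ∀ b : A, ∫ _g : G, b ∂μ = b := fun b => by simp
    -- rewriting the products as integrals
    have hrwL : ∀ l : Λ, (∫ g : G, α g (u l) ∂μ) * a - a = ∫ g : G, (α g (u l) * a - a) ∂μ := by
      intro l
      have h2 : ∫ g : G, (α g (u l) * a) ∂μ = (∫ g : G, α g (u l) ∂μ) * a := by
        simpa using (((ContinuousLinearMap.mul ℝ A).flip a).integral_comp_comm (hintg (u l)))
      rw [integral_sub (hCint (fun g => α g (u l) * a) (((hcont (u l)).mul continuous_const))) (integrable_const a),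
        h2, hconst]
    have hrwR : ∀ l : Λ, a * (∫ g : G, α g (u l) ∂μ) - a = ∫ g : G, (a * α g (u l) - a) ∂μ := by
      intro l
      have h2 : ∫ g : G, (a * α g (u l)) ∂μ = a * (∫ g : G, α g (u l) ∂μ) := by
        simpa using ((ContinuousLinearMap.mul ℝ A a).integral_comp_comm (hintg (u l)))
      rw [integral_sub (hCint (fun g => a * α g (u l)) ((continuous_const.mul (hcont (u l))))) (integrable_const a),
        h2, hconst]
    -- the compact set
    have hKcomp : IsCompact ((fun g : G => α g⁻¹ a) '' Set.univ) :=
      isCompact_univ.image ((hcont a).comp continuous_inv)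
    constructor
    · -- left approximation
      rw [Metric.tendsto_atTop]
      intro ε hε
      obtain ⟨l0, hl0⟩ := exists_uniform_small (fun l b => u l * b - b)
        (fun l b c => by
          have h1 : u l * b - b = (u l * (b - c) - (b - c)) + (u l * c - c) := by
            rw [mul_sub]; abel
          have h2 : ‖u l * (b - c)‖ ≤ ‖u l‖ * ‖b - c‖ := norm_mul_le _ _
          have h3 : ‖u l‖ * ‖b - c‖ ≤ 1 * ‖b - c‖ :=
            mul_le_mul_of_nonneg_right (hnorm l) (norm_nonneg _)
          calc ‖u l * b - b‖ = ‖(u l * (b - c) - (b - c)) + (u l * c - c)‖ := by rw [h1]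
            _ ≤ ‖u l * (b - c) - (b - c)‖ + ‖u l * c - c‖ := norm_add_le _ _
            _ ≤ (‖u l * (b - c)‖ + ‖b - c‖) + ‖u l * c - c‖ := by
                gcongr; exact norm_sub_le _ _
            _ ≤ 2 * ‖b - c‖ + ‖u l * c - c‖ := by linarith)
        (fun b => (happrox b).1) hKcomp (half_pos hε)
      refine ⟨l0, fun l hl => ?_⟩
      rw [Real.dist_eq, sub_zero, abs_of_nonneg (norm_nonneg _)]
      have hbound : ∀ g : G, ‖α g (u l) * a - a‖ ≤ ε / 2 := fun g => by
        rw [hkeyL g (u l) a]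
        exact le_of_lt (hl0 l hl _ (Set.mem_image_of_mem _ (Set.mem_univ g)))
      calc ‖(∫ g : G, α g (u l) ∂μ) * a - a‖ = ‖∫ g : G, (α g (u l) * a - a) ∂μ‖ := by
            rw [hrwL l]
        _ ≤ (ε / 2) * (μ Set.univ).toReal :=
            norm_integral_le_of_norm_le_const (Eventually.of_forall hbound)
        _ = ε / 2 := by simp
        _ < ε := by linarith
    · -- right approximation
      rw [Metric.tendsto_atTop]
      intro ε hε
      obtain ⟨l0, hl0⟩ := exists_uniform_small (fun l b => b * u l - b)
        (fun l b c => by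
          have h1 : b * u l - b = ((b - c) * u l - (b - c)) + (c * u l - c) := by
            rw [sub_mul]; abel
          have h2 : ‖(b - c) * u l‖ ≤ ‖b - c‖ * ‖u l‖ := norm_mul_le _ _
          have h3 : ‖b - c‖ * ‖u l‖ ≤ ‖b - c‖ * 1 :=
            mul_le_mul_of_nonneg_left (hnorm l) (norm_nonneg _)
          calc ‖b * u l - b‖ = ‖((b - c) * u l - (b - c)) + (c * u l - c)‖ := by rw [h1]
            _ ≤ ‖(b - c) * u l - (b - c)‖ + ‖c * u l - c‖ := norm_add_le _ _
            _ ≤ (‖(b - c) * u l‖ + ‖b - c‖) + ‖c * u l - c‖ := by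
                gcongr; exact norm_sub_le _ _
            _ ≤ 2 * ‖b - c‖ + ‖c * u l - c‖ := by linarith)
        (fun b => (happrox b).2) hKcomp (half_pos hε)
      refine ⟨l0, fun l hl => ?_⟩
      rw [Real.dist_eq, sub_zero, abs_of_nonneg (norm_nonneg _)]
      have hbound : ∀ g : G, ‖a * α g (u l) - a‖ ≤ ε / 2 := fun g => by
        rw [hkeyR g (u l) a]
        exact le_of_lt (hl0 l hl _ (Set.mem_image_of_mem _ (Set.mem_univ g)))
      calc ‖a * (∫ g : G, α g (u l) ∂μ) - a‖ = ‖∫ g : G, (a * α g (u l) - a) ∂μ‖ := by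
            rw [hrwR l]
        _ ≤ (ε / 2) * (μ Set.univ).toReal :=
            norm_integral_le_of_norm_le_const (Eventually.of_forall hbound)
        _ = ε / 2 := by simp
        _ < ε := by linarith

/-- Averaging an approximate unit of a C*-algebra over a compact group action
with respect to the normalized Haar measure yields again an approximate unit. -/
theorem approximateUnit_average_isApproximateUnit
    {G A : Type*} [TopologicalSpace G] [Group G] [IsTopologicalGroup G] [CompactSpace G]
    [MeasurableSpace G] [BorelSpace G]
    [NonUnitalCStarAlgebra A]
    (μ : Measure G) [μ.IsHaarMeasure] [IsProbabilityMeasure μ]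
    -- an action α of G on A
    (α : G → (A ≃⋆ₐ[ℂ] A))
    (hone : α 1 = StarAlgEquiv.refl ℂ A)
    (hmul : ∀ g h : G, ∀ a : A, α (g * h) a = α g (α h a))
    (hcont : ∀ a : A, Continuous fun g : G => α g a)
    -- an approximate unit (u_λ) of A
    {Λ : Type*} [Nonempty Λ] [SemilatticeSup Λ]
    (u : Λ → A)
    (hpos : ∀ l : Λ, IsPositiveElem (u l))
    (hnorm : ∀ l : Λ, ‖u l‖ ≤ 1)
    (happrox : ∀ a : A,
      Tendsto (fun l : Λ => ‖u l * a - a‖) atTop (nhds 0) ∧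
      Tendsto (fun l : Λ => ‖a * u l - a‖) atTop (nhds 0)) :
    -- then (E_α(u_λ)) is an approximate unit of A, where E_α(x) = ∫_G α_g(x) dg
    (∀ l : Λ, IsPositiveElem (∫ g : G, α g (u l) ∂μ) ∧ ‖∫ g : G, α g (u l) ∂μ‖ ≤ 1) ∧
    (∀ a : A,
      Tendsto (fun l : Λ => ‖(∫ g : G, α g (u l) ∂μ) * a - a‖) atTop (nhds 0) ∧
      Tendsto (fun l : Λ => ‖a * (∫ g : G, α g (u l) ∂μ) - a‖) atTop (nhds 0)) := by
  letI : PartialOrder A := cstarPartialOrder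
  letI : StarOrderedRing A := cstarStarOrderedRing
  exact approximateUnit_average_isApproximateUnit_aux μ α hone hmul hcont u hpos hnorm happrox
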